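/- arXiv:1206.6168 — 2 statements merged into one kernel-verified Lean document; each statement's English description precedes it below -/
import Mathlib

section
/- For every complex number α on the unit circle, there exist unitary 2×2 matrices v and w such that the multiplicative commutator v w v⁻¹ w⁻¹ equals the diagonal matrix diag(α, conj(α)). -/
theorem product_commutator_diag (α : ℂ) (hα : ‖α‖ = 1) :
    ∃ v w : Matrix (Fin 2) (Fin 2) ℂ,
      v ∈ Matrix.unitaryGroup (Fin 2) ℂ ∧ w ∈ Matrix.unitaryGroup (Fin 2) ℂ ∧
      v * w * v⁻¹ * w⁻¹ = Matrix.diagonal ![α, (starRingEnd ℂ) α] := by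
  obtain ⟨β, hβ⟩ : ∃ β : ℂ, β ^ 2 = α :=
    IsAlgClosed.exists_pow_nat_eq α (by norm_num : 0 < 2)
  have hβ1 : β * (starRingEnd ℂ) β = 1 := by
    have : ‖β‖ = 1 := by
      have h2 : ‖β‖ ^ 2 = 1 := by rw [← norm_pow, hβ, hα]
      nlinarith [norm_nonneg β]
    rw [mul_comm, Complex.conj_mul']
    simp [this]
  set v : Matrix (Fin 2) (Fin 2) ℂ := Matrix.diagonal ![β, (starRingEnd ℂ) β] with hv
  set w : Matrix (Fin 2) (Fin 2) ℂ := ![![0,1],![1,0]] with hw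
  have hvinv : v * Matrix.diagonal ![(starRingEnd ℂ) β, β] = 1 := by
    rw [hv, Matrix.diagonal_mul_diagonal]
    ext i j
    fin_cases i <;> fin_cases j <;>
      simp [Matrix.diagonal, hβ1, mul_comm] at *
  have hwinv : w * w = 1 := by
    ext i j
    fin_cases i <;> fin_cases j <;>
      rw [Matrix.mul_apply] <;> simp [hw, Matrix.mul_apply, Fin.sum_univ_two, Matrix.one_apply]
  refine ⟨v, w, ?_, ?_, ?_⟩
  · rw [Matrix.mem_unitaryGroup_iff]
    have : v.conjTranspose = Matrix.diagonal ![(starRingEnd ℂ) β, β] := by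
      ext i j
      fin_cases i <;> fin_cases j <;> simp [hv, Matrix.diagonal]
    rw [Matrix.star_eq_conjTranspose, this]; exact hvinv
  · rw [Matrix.mem_unitaryGroup_iff]
    have : w.conjTranspose = w := by
      ext i j
      fin_cases i <;> fin_cases j <;> rw [Matrix.conjTranspose_apply] <;> simp [hw]
    rw [Matrix.star_eq_conjTranspose, this]; exact hwinv
  · rw [Matrix.inv_eq_right_inv hvinv, Matrix.inv_eq_right_inv hwinv]
    ext i j
    fin_cases i <;> fin_cases j <;>
      simp only [Matrix.mul_apply, Fin.sum_univ_two] <;>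
      simp [hv, hw, Matrix.mul_apply, Fin.sum_univ_two, Matrix.diagonal, ← hβ, sq, mul_comm,
        map_mul]
end

section
/- Let θ : [0,1] → ℝ be continuous. Then there exist unitaries v₁, w₁, v₂, w₂, v₃, w₃, v₄, w₄ in the unitary group of M₂(C[0,1]) such that for all s ∈ [0,1], the product of the four commutators (v₁(s),w₁(s))(v₂(s),w₂(s))(v₃(s),w₃(s))(v₄(s),w₄(s)) equals diag(e^{iθ(s)}, e^{−iθ(s)}). -/
open scoped Matrix.Norms.L2Operator

open Complex Matrix

noncomputable def dMap (θ : C(Set.Icc (0:ℝ) 1, ℝ)) :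
    C(Set.Icc (0:ℝ) 1, Matrix (Fin 2) (Fin 2) ℂ) :=
  ⟨fun s => Matrix.diagonal ![Complex.exp (Complex.I * (θ s : ℝ)), 1], by
    apply continuous_matrix
    intro i j
    fin_cases i <;> fin_cases j <;>
      simp [Matrix.diagonal] <;> fun_prop⟩

lemma dMap_mem (θ : C(Set.Icc (0:ℝ) 1, ℝ)) :
    dMap θ ∈ unitary (C(Set.Icc (0:ℝ) 1, Matrix (Fin 2) (Fin 2) ℂ)) := by
  have key : ∀ s : Set.Icc (0:ℝ) 1,
      star (Complex.exp (Complex.I * (θ s : ℝ))) * Complex.exp (Complex.I * (θ s : ℝ)) = 1 := by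
    intro s
    rw [Complex.star_def, ← Complex.exp_conj, ← Complex.exp_add]
    simp [Complex.ext_iff]
  constructor <;>
  · ext s i j
    simp only [ContinuousMap.mul_apply, ContinuousMap.coe_star, ContinuousMap.star_apply, dMap,
      ContinuousMap.coe_mk, star_eq_conjTranspose, diagonal_conjTranspose,
      diagonal_mul_diagonal, ContinuousMap.one_apply]
    congr 1
    have := key s
    funext k
    fin_cases k <;> simp_all [mul_comm]

noncomputable def sMap : C(Set.Icc (0:ℝ) 1, Matrix (Fin 2) (Fin 2) ℂ) :=
  ContinuousMap.const _ !![0,1;1,0]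

lemma sMap_mem : sMap ∈ unitary (C(Set.Icc (0:ℝ) 1, Matrix (Fin 2) (Fin 2) ℂ)) := by
  constructor <;>
  · ext s i j
    simp only [ContinuousMap.mul_apply, ContinuousMap.coe_star, ContinuousMap.star_apply, sMap,
      ContinuousMap.const_apply, ContinuousMap.one_apply, star_eq_conjTranspose]
    fin_cases i <;> fin_cases j <;>
      simp [Matrix.mul_apply, Fin.sum_univ_two, Matrix.one_apply]

/-- For a continuous `θ : [0,1] → ℝ` there are unitaries `v₁,w₁,…,v₄,w₄` in
`M₂(C[0,1])` whose commutator product is pointwise `diag(e^{iθ(s)}, e^{−iθ(s)})`. -/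
theorem exists_four_commutators_diag_theta
    (θ : C(Set.Icc (0:ℝ) 1, ℝ)) :
    ∃ v w : Fin 4 → unitary (C(Set.Icc (0:ℝ) 1, Matrix (Fin 2) (Fin 2) ℂ)),
      ∀ s : Set.Icc (0:ℝ) 1,
        (((List.ofFn (fun j => v j * w j * (v j)⁻¹ * (w j)⁻¹)).prod :
            unitary (C(Set.Icc (0:ℝ) 1, Matrix (Fin 2) (Fin 2) ℂ))) :
              C(Set.Icc (0:ℝ) 1, Matrix (Fin 2) (Fin 2) ℂ)) s =
          Matrix.diagonal ![Complex.exp (Complex.I * (θ s : ℝ)),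
            Complex.exp (-(Complex.I * (θ s : ℝ)))] := by
  refine ⟨![⟨dMap θ, dMap_mem θ⟩, 1, 1, 1], ![⟨sMap, sMap_mem⟩, 1, 1, 1], fun s => ?_⟩
  have hprod : (List.ofFn (fun j =>
      (![⟨dMap θ, dMap_mem θ⟩, 1, 1, 1] : Fin 4 → _) j * (![⟨sMap, sMap_mem⟩, 1, 1, 1] : Fin 4 → _) j *
        ((![⟨dMap θ, dMap_mem θ⟩, 1, 1, 1] : Fin 4 → _) j)⁻¹ *
        ((![⟨sMap, sMap_mem⟩, 1, 1, 1] : Fin 4 → _) j)⁻¹)).prod =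
      ⟨dMap θ, dMap_mem θ⟩ * ⟨sMap, sMap_mem⟩ * (⟨dMap θ, dMap_mem θ⟩)⁻¹ *
        (⟨sMap, sMap_mem⟩ : unitary _)⁻¹ := by
    simp [List.ofFn_succ]
  rw [hprod, ← Unitary.star_eq_inv, ← Unitary.star_eq_inv]
  simp only [Submonoid.coe_mul, Unitary.coe_star]
  simp only [ContinuousMap.mul_apply, ContinuousMap.star_apply, dMap, sMap,
    ContinuousMap.coe_mk, ContinuousMap.const_apply, star_eq_conjTranspose,
    diagonal_conjTranspose]
  ext i j
  fin_cases i <;> fin_cases j <;>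
    simp [Matrix.mul_apply, Fin.sum_univ_two, Matrix.diagonal, ← Complex.exp_conj,
      ← Complex.exp_add, Complex.ext_iff]
end
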